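/- Let d : X → B be a crossed module of cocommutative Hopf algebras over a field K (so X is a B-module Hopf algebra, d is a Hopf algebra morphism with d(ᵇx) = b₁ d(x) S(b₂) and the Peiffer identity ^{d(y)}x = y₁ x S(y₂)). Then in the smash product X ⋊ B, the maps p₂(x⊗b) = ε(x)b, p₁(x⊗b) = d(x)b, and e(b) = 1⊗b are Hopf algebra morphisms, and p₁ ∘ e = p₂ ∘ e = id_B, so they form a reflexive graph in the category of cocommutative Hopf algebras. -/

import Mathlib

open TensorProduct Coalgebra

/-- A coalgebra is cocommutative if the comultiplication is invariant under the
switch map. -/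
def IsCocomm (K A : Type*) [CommSemiring K] [AddCommMonoid A] [Module K A]
    [Coalgebra K A] : Prop :=
  (TensorProduct.comm K A A).toLinearMap ∘ₗ (Coalgebra.comul (R := K) (A := A)) =
    Coalgebra.comul

/-- The linear map sending `a ⊗ b` to the Sweedler sum `a₁ * b * S(a₂)`
(the adjoint action of a Hopf algebra on itself). -/
noncomputable def adAct (K A : Type*) [CommSemiring K] [Semiring A] [HopfAlgebra K A] :
    A ⊗[K] A →ₗ[K] A :=
  (LinearMap.mul' K A) ∘ₗ
    (LinearMap.lTensor A ((LinearMap.mul' K A) ∘ₗ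
      (TensorProduct.comm K A A).toLinearMap ∘ₗ
      (LinearMap.rTensor A (HopfAlgebra.antipode (R := K) (A := A))))) ∘ₗ
    (TensorProduct.assoc K A A A).toLinearMap ∘ₗ
    (LinearMap.rTensor A (Coalgebra.comul (R := K) (A := A)))

/-- The linear map sending `x ⊗ y` to the Sweedler sum
`x₁ * y₁ * S(x₂) * S(y₂)` (the "Hopf commutator" `{x, y}`). -/
noncomputable def hopfComm (K A : Type*) [CommSemiring K] [Semiring A] [HopfAlgebra K A] :
    A ⊗[K] A →ₗ[K] A :=
  (LinearMap.mul' K A) ∘ₗ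
    (TensorProduct.map (LinearMap.mul' K A)
      ((LinearMap.mul' K A) ∘ₗ
        TensorProduct.map (HopfAlgebra.antipode (R := K) (A := A))
          (HopfAlgebra.antipode (R := K) (A := A)))) ∘ₗ
    (TensorProduct.tensorTensorTensorComm K A A A A).toLinearMap ∘ₗ
    (TensorProduct.map (Coalgebra.comul (R := K)) (Coalgebra.comul (R := K)))


/-- The smash-product multiplication on `X ⊗ B` induced by an action
`ξ : B ⊗ X → X`: it sends `(x ⊗ b) ⊗ (x' ⊗ b')` to `x·(ᵇ¹x') ⊗ b₂b'`. -/
noncomputable def smashMul {K X B : Type*} [Field K] [Ring X] [HopfAlgebra K X]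
    [Ring B] [HopfAlgebra K B] (ξ : B ⊗[K] X →ₗ[K] X) :
    (X ⊗[K] B) ⊗[K] (X ⊗[K] B) →ₗ[K] X ⊗[K] B :=
  (TensorProduct.map
      ((LinearMap.mul' K X) ∘ₗ (LinearMap.lTensor X ξ) ∘ₗ
        (TensorProduct.assoc K X B X).toLinearMap)
      (LinearMap.mul' K B)) ∘ₗ
    (TensorProduct.tensorTensorTensorComm K (X ⊗[K] B) B X B).toLinearMap ∘ₗ
    (TensorProduct.map
      ((TensorProduct.assoc K X B B).symm.toLinearMap ∘ₗ
        (LinearMap.lTensor X (Coalgebra.comul (R := K) (A := B))))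
      (LinearMap.id : X ⊗[K] B →ₗ[K] X ⊗[K] B))

/-- The tensor-product comultiplication on `X ⊗ B`. -/
noncomputable def smashComul {K X B : Type*} [Field K] [Ring X] [HopfAlgebra K X]
    [Ring B] [HopfAlgebra K B] :
    X ⊗[K] B →ₗ[K] (X ⊗[K] B) ⊗[K] (X ⊗[K] B) :=
  (TensorProduct.tensorTensorTensorComm K X X B B).toLinearMap ∘ₗ
    (TensorProduct.map (Coalgebra.comul (R := K)) (Coalgebra.comul (R := K)))

/-- The tensor-product counit on `X ⊗ B`. -/
noncomputable def smashCounit {K X B : Type*} [Field K] [Ring X] [HopfAlgebra K X]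
    [Ring B] [HopfAlgebra K B] : X ⊗[K] B →ₗ[K] K :=
  (TensorProduct.lid K K).toLinearMap ∘ₗ
    (TensorProduct.map (Coalgebra.counit (R := K)) (Coalgebra.counit (R := K)))

/-- `p₁(x ⊗ b) = d(x)b`. -/
noncomputable def smashFst {K X B : Type*} [Field K] [Ring X] [HopfAlgebra K X]
    [Ring B] [HopfAlgebra K B] (d : X →ₐc[K] B) : X ⊗[K] B →ₗ[K] B :=
  (LinearMap.mul' K B) ∘ₗ TensorProduct.map d.toLinearMap LinearMap.id

/-- `p₂(x ⊗ b) = ε(x)b`. -/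
noncomputable def smashSnd {K X B : Type*} [Field K] [Ring X] [HopfAlgebra K X]
    [Ring B] [HopfAlgebra K B] : X ⊗[K] B →ₗ[K] B :=
  (TensorProduct.lid K B).toLinearMap ∘ₗ
    LinearMap.rTensor B (Coalgebra.counit (R := K) (A := X))

/-- `e(b) = 1 ⊗ b`. -/
noncomputable def smashUnit {K X B : Type*} [Field K] [Ring X] [HopfAlgebra K X]
    [Ring B] [HopfAlgebra K B] : B →ₗ[K] X ⊗[K] B :=
  (TensorProduct.mk K X B) 1

section Helpers

lemma repr_counit_smul_right {K A : Type*} [CommSemiring K] [AddCommMonoid A] [Module K A]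
    [Coalgebra K A] (b : A) (R : Coalgebra.Repr K b (A × A)) :
    ∑ i ∈ R.index, Coalgebra.counit (R := K) (R.left i) • R.right i = b := by
  have h := Coalgebra.sum_counit_tmul_eq (R := K) R
  have := congrArg (TensorProduct.lid K A) h
  rw [map_sum] at this
  simpa using this

lemma repr_counit_mul_counit {K A : Type*} [CommSemiring K] [AddCommMonoid A] [Module K A]
    [Coalgebra K A] (b : A) (R : Coalgebra.Repr K b (A × A)) :
    ∑ i ∈ R.index, Coalgebra.counit (R := K) (R.left i) * Coalgebra.counit (R := K) (R.right i)
      = Coalgebra.counit (R := K) b := by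
  have h := Coalgebra.sum_tmul_counit_eq (R := K) R
  have h2 := congrArg (TensorProduct.lid K K)
    (congrArg (TensorProduct.map (Coalgebra.counit (R := K) (A := A))
      (LinearMap.id : K →ₗ[K] K)) h)
  rw [map_sum, map_sum] at h2
  simp only [TensorProduct.map_tmul, LinearMap.id_apply, TensorProduct.lid_tmul,
    smul_eq_mul] at h2
  rw [mul_one] at h2
  exact h2

lemma adAct_tmul {K A : Type*} [CommSemiring K] [Semiring A] [HopfAlgebra K A]
    (a c : A) (R : Coalgebra.Repr K a (A × A)) :
    adAct K A (a ⊗ₜ c) = ∑ i ∈ R.index,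
      R.left i * c * HopfAlgebra.antipode (R := K) (R.right i) := by
  simp only [adAct, LinearMap.comp_apply, LinearMap.rTensor_tmul, ← R.eq]
  simp [sum_tmul, mul_assoc]

lemma adAct_mul {K A : Type*} [CommSemiring K] [Semiring A] [HopfAlgebra K A]
    (b c : A) (R : Coalgebra.Repr K b (A × A)) :
    ∑ i ∈ R.index, adAct K A (R.left i ⊗ₜ c) * R.right i = b * c := by
  have key := Coalgebra.sum_tmul_tmul_eq R (fun i => ℛ K (R.left i)) (fun i => ℛ K (R.right i))
  set ψ : A ⊗[K] (A ⊗[K] A) →ₗ[K] A :=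
    (LinearMap.mul' K A) ∘ₗ
      TensorProduct.map (LinearMap.mulRight K c)
        ((LinearMap.mul' K A) ∘ₗ
          TensorProduct.map (HopfAlgebra.antipode (R := K) (A := A)) LinearMap.id) with hψ
  have hψ_tmul : ∀ p q r : A,
      ψ (p ⊗ₜ (q ⊗ₜ r)) = p * c * (HopfAlgebra.antipode (R := K) q * r) := by
    intro p q r; simp [hψ]
  have h2 := congrArg ψ key
  simp only [map_sum, hψ_tmul] at h2
  calc ∑ i ∈ R.index, adAct K A (R.left i ⊗ₜ c) * R.right i
      = ∑ i ∈ R.index, ∑ j ∈ (ℛ K (R.left i)).index,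
          (ℛ K (R.left i)).left j * c *
            (HopfAlgebra.antipode (R := K) ((ℛ K (R.left i)).right j) * R.right i) := by
        refine Finset.sum_congr rfl fun i _ => ?_
        rw [adAct_tmul _ _ (ℛ K (R.left i)), Finset.sum_mul]
        exact Finset.sum_congr rfl fun j _ => by rw [mul_assoc, mul_assoc]
    _ = ∑ i ∈ R.index, ∑ j ∈ (ℛ K (R.right i)).index,
          R.left i * c * (HopfAlgebra.antipode (R := K) ((ℛ K (R.right i)).left j) *
            (ℛ K (R.right i)).right j) := h2
    _ = b * c := by
        have h4 : ∀ i ∈ R.index, ∑ j ∈ (ℛ K (R.right i)).index,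
            R.left i * c * (HopfAlgebra.antipode (R := K) ((ℛ K (R.right i)).left j) *
              (ℛ K (R.right i)).right j)
            = Coalgebra.counit (R := K) (R.right i) • (R.left i * c) := by
          intro i _
          rw [← Finset.mul_sum, HopfAlgebra.sum_antipode_mul_eq_smul]
          simp [mul_smul_comm]
        rw [Finset.sum_congr rfl h4]
        have h3 := Coalgebra.sum_tmul_counit_eq (R := K) R
        apply_fun (LinearMap.mul' K A ∘ₗ
          TensorProduct.map (LinearMap.mulRight K c) ((Algebra.linearMap K A))) at h3
        simp only [map_sum, LinearMap.comp_apply, TensorProduct.map_tmul] at h3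
        simpa [Algebra.smul_def, mul_comm, Algebra.commutes, smul_mul_assoc] using h3

lemma smashMul_tmul {K X B : Type*} [Field K] [Ring X] [HopfAlgebra K X]
    [Ring B] [HopfAlgebra K B] (ξ : B ⊗[K] X →ₗ[K] X) (x x' : X) (b b' : B)
    (R : Coalgebra.Repr K b (B × B)) :
    smashMul ξ ((x ⊗ₜ b) ⊗ₜ (x' ⊗ₜ b'))
      = ∑ i ∈ R.index, (x * ξ (R.left i ⊗ₜ x')) ⊗ₜ[K] (R.right i * b') := by
  simp only [smashMul, LinearMap.comp_apply, TensorProduct.map_tmul,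
    LinearMap.lTensor_tmul, LinearMap.id_apply, ← R.eq]
  simp [tmul_sum, sum_tmul, Finset.sum_comm]

lemma smashComul_tmul {K X B : Type*} [Field K] [Ring X] [HopfAlgebra K X]
    [Ring B] [HopfAlgebra K B] (x : X) (b : B)
    (Rx : Coalgebra.Repr K x (X × X)) (Rb : Coalgebra.Repr K b (B × B)) :
    smashComul (x ⊗ₜ[K] b) = ∑ i ∈ Rx.index, ∑ j ∈ Rb.index,
      ((Rx.left i ⊗ₜ[K] Rb.left j) ⊗ₜ[K] (Rx.right i ⊗ₜ[K] Rb.right j)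
        : (X ⊗[K] B) ⊗[K] (X ⊗[K] B)) := by
  simp only [smashComul, LinearMap.comp_apply, TensorProduct.map_tmul, ← Rx.eq, ← Rb.eq]
  simp [tmul_sum, sum_tmul, map_sum]
  rw [Finset.sum_comm]

lemma smashSnd_tmul {K X B : Type*} [Field K] [Ring X] [HopfAlgebra K X]
    [Ring B] [HopfAlgebra K B] (x : X) (b : B) :
    (smashSnd : X ⊗[K] B →ₗ[K] B) (x ⊗ₜ b) = Coalgebra.counit (R := K) x • b := by
  simp [smashSnd]

lemma smashFst_tmul {K X B : Type*} [Field K] [Ring X] [HopfAlgebra K X]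
    [Ring B] [HopfAlgebra K B] (d : X →ₐc[K] B) (x : X) (b : B) :
    smashFst d (x ⊗ₜ b) = d x * b := by
  simp [smashFst]
  rfl

end Helpers

/-- Given a crossed module `d : X → B` of cocommutative Hopf algebras (with action
`ξ`, equivariance `d(ᵇx) = b₁ d(x) S(b₂)` and the Peiffer identity
`^{d(y)}x = y₁ x S(y₂)`), the maps `p₂(x⊗b) = ε(x)b`, `p₁(x⊗b) = d(x)b` and
`e(b) = 1⊗b` on the smash product `X ⋊ B` are Hopf algebra morphisms satisfying
`p₁ ∘ e = p₂ ∘ e = id`, so they form a reflexive graph of cocommutative Hopf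
algebras. -/

theorem crossedModule_reflexiveGraph
    {K X B : Type*} [Field K] [Ring X] [HopfAlgebra K X] [Ring B] [HopfAlgebra K B]
    (hX : _root_.IsCocomm K X) (hB : _root_.IsCocomm K B)
    (ξ : B ⊗[K] X →ₗ[K] X)
    -- `X` is a `B`-module Hopf algebra:
    (hact_assoc : ∀ (b b' : B) (x : X), ξ ((b * b') ⊗ₜ[K] x)
      = ξ (b ⊗ₜ[K] ξ (b' ⊗ₜ[K] x)))
    (hact_one : ∀ x : X, ξ ((1 : B) ⊗ₜ[K] x) = x)
    (hact_mul : ξ ∘ₗ LinearMap.lTensor B (LinearMap.mul' K X)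
      = (LinearMap.mul' K X) ∘ₗ TensorProduct.map ξ ξ ∘ₗ
        (TensorProduct.tensorTensorTensorComm K B B X X).toLinearMap ∘ₗ
        LinearMap.rTensor (X ⊗[K] X) (Coalgebra.comul (R := K)))
    (hact_unit : ∀ b : B, ξ (b ⊗ₜ[K] (1 : X)) = Coalgebra.counit (R := K) b • (1 : X))
    (hact_comul : (Coalgebra.comul (R := K)) ∘ₗ ξ
      = TensorProduct.map ξ ξ ∘ₗ
        (TensorProduct.tensorTensorTensorComm K B B X X).toLinearMap ∘ₗ
        TensorProduct.map (Coalgebra.comul (R := K)) (Coalgebra.comul (R := K)))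
    (hact_counit : ∀ (b : B) (x : X), Coalgebra.counit (R := K) (ξ (b ⊗ₜ[K] x))
      = Coalgebra.counit (R := K) b * Coalgebra.counit (R := K) x)
    -- `d` is a crossed module:
    (d : X →ₐc[K] B)
    (hequiv : d.toLinearMap ∘ₗ ξ = adAct K B ∘ₗ LinearMap.lTensor B d.toLinearMap)
    (hPeiffer : ξ ∘ₗ LinearMap.rTensor X d.toLinearMap = adAct K X) :
    -- reflexivity: `p₁ ∘ e = p₂ ∘ e = id`
    (smashFst d ∘ₗ smashUnit = (LinearMap.id : B →ₗ[K] B)) ∧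
    (smashSnd ∘ₗ (smashUnit : B →ₗ[K] X ⊗[K] B) = LinearMap.id) ∧
    -- `p₂` is a Hopf algebra morphism
    ((smashSnd : X ⊗[K] B →ₗ[K] B) ∘ₗ smashMul ξ
      = (LinearMap.mul' K B) ∘ₗ TensorProduct.map smashSnd smashSnd) ∧
    (smashSnd ((1 : X) ⊗ₜ[K] (1 : B)) = 1) ∧
    ((Coalgebra.comul (R := K)) ∘ₗ (smashSnd : X ⊗[K] B →ₗ[K] B)
      = TensorProduct.map smashSnd smashSnd ∘ₗ smashComul) ∧
    ((Coalgebra.counit (R := K)) ∘ₗ (smashSnd : X ⊗[K] B →ₗ[K] B) = smashCounit) ∧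
    -- `p₁` is a Hopf algebra morphism
    (smashFst d ∘ₗ smashMul ξ
      = (LinearMap.mul' K B) ∘ₗ TensorProduct.map (smashFst d) (smashFst d)) ∧
    (smashFst d ((1 : X) ⊗ₜ[K] (1 : B)) = 1) ∧
    ((Coalgebra.comul (R := K)) ∘ₗ smashFst d
      = TensorProduct.map (smashFst d) (smashFst d) ∘ₗ smashComul) ∧
    ((Coalgebra.counit (R := K)) ∘ₗ smashFst d = smashCounit) ∧
    -- `e` is a Hopf algebra morphism
    ((smashUnit : B →ₗ[K] X ⊗[K] B) ∘ₗ (LinearMap.mul' K B)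
      = smashMul ξ ∘ₗ TensorProduct.map smashUnit smashUnit) ∧
    (smashUnit (1 : B) = (1 : X) ⊗ₜ[K] (1 : B)) ∧
    (smashComul ∘ₗ (smashUnit : B →ₗ[K] X ⊗[K] B)
      = TensorProduct.map smashUnit smashUnit ∘ₗ (Coalgebra.comul (R := K))) ∧
    (smashCounit ∘ₗ (smashUnit : B →ₗ[K] X ⊗[K] B) = Coalgebra.counit (R := K)) := by
  refine ⟨?_, ?_, ?_, ?_, ?_, ?_, ?_, ?_, ?_, ?_, ?_, ?_, ?_, ?_⟩
  · -- p₁ ∘ e = id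
    ext b
    simp only [LinearMap.coe_comp, Function.comp_apply, smashUnit, TensorProduct.mk_apply,
      smashFst_tmul, map_one, one_mul, LinearMap.id_apply]
  · -- p₂ ∘ e = id
    ext b
    simp [smashSnd, smashUnit]
  · -- p₂ multiplicative
    ext x b x' b'
    simp only [LinearMap.coe_comp, Function.comp_apply,
      TensorProduct.AlgebraTensorModule.curry_apply, TensorProduct.curry_apply,
      LinearMap.coe_restrictScalars, TensorProduct.map_tmul, LinearMap.mul'_apply]
    rw [smashMul_tmul ξ x x' b b' (ℛ K b), map_sum]
    simp only [smashSnd_tmul, Bialgebra.counit_mul, hact_counit]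
    have h1 : ∀ i ∈ (ℛ K b).index,
        (Coalgebra.counit (R := K) x *
            (Coalgebra.counit (R := K) ((ℛ K b).left i) * Coalgebra.counit (R := K) x')) •
            ((ℛ K b).right i * b')
          = (Coalgebra.counit (R := K) x * Coalgebra.counit (R := K) x') •
            ((Coalgebra.counit (R := K) ((ℛ K b).left i) • (ℛ K b).right i) * b') := by
      intro i _
      rw [smul_mul_assoc, smul_smul]
      congr 1
      ring
    rw [Finset.sum_congr rfl h1, ← Finset.smul_sum, ← Finset.sum_mul,
      repr_counit_smul_right b (ℛ K b), smul_mul_assoc, mul_smul_comm, smul_smul]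
  · -- p₂ unital
    simp [smashSnd_tmul]
  · -- p₂ comultiplicative
    ext x b
    simp only [LinearMap.coe_comp, Function.comp_apply,
      TensorProduct.AlgebraTensorModule.curry_apply, TensorProduct.curry_apply,
      LinearMap.coe_restrictScalars]
    rw [smashComul_tmul x b (ℛ K x) (ℛ K b), map_sum, smashSnd_tmul, map_smul]
    simp only [map_sum, TensorProduct.map_tmul, smashSnd_tmul, smul_tmul', tmul_smul,
      smul_smul]
    simp only [← smul_tmul']
    simp only [← Finset.smul_sum]
    rw [← Finset.sum_smul, (ℛ K b).eq]
    congr 1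
    rw [← repr_counit_mul_counit x (ℛ K x)]
    exact Finset.sum_congr rfl fun i _ => mul_comm _ _
  · -- p₂ counital
    ext x b
    simp [smashSnd_tmul, smashCounit, smul_eq_mul]
  · -- p₁ multiplicative
    ext x b x' b'
    simp only [LinearMap.coe_comp, Function.comp_apply,
      TensorProduct.AlgebraTensorModule.curry_apply, TensorProduct.curry_apply,
      LinearMap.coe_restrictScalars, TensorProduct.map_tmul, LinearMap.mul'_apply]
    rw [smashMul_tmul ξ x x' b b' (ℛ K b), map_sum]
    simp only [smashFst_tmul, map_mul]
    have hd : ∀ i ∈ (ℛ K b).index,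
        d x * d (ξ ((ℛ K b).left i ⊗ₜ[K] x')) * ((ℛ K b).right i * b')
          = d x * ((adAct K B ((ℛ K b).left i ⊗ₜ[K] (d x')) * (ℛ K b).right i) * b') := by
      intro i _
      have h := LinearMap.congr_fun hequiv ((ℛ K b).left i ⊗ₜ[K] x')
      simp only [LinearMap.comp_apply, LinearMap.lTensor_tmul] at h
      have h' : d (ξ ((ℛ K b).left i ⊗ₜ[K] x'))
          = adAct K B ((ℛ K b).left i ⊗ₜ[K] d x') := h
      rw [h']
      simp only [mul_assoc]
    rw [Finset.sum_congr rfl hd, ← Finset.mul_sum, ← Finset.sum_mul,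
      adAct_mul b (d x') (ℛ K b)]
    simp only [mul_assoc]
  · -- p₁ unital
    simp [smashFst_tmul]
  · -- p₁ comultiplicative
    ext x b
    simp only [LinearMap.coe_comp, Function.comp_apply,
      TensorProduct.AlgebraTensorModule.curry_apply, TensorProduct.curry_apply,
      LinearMap.coe_restrictScalars]
    rw [smashComul_tmul x b (ℛ K x) (ℛ K b), map_sum]
    simp only [map_sum, TensorProduct.map_tmul, smashFst_tmul]
    rw [Bialgebra.comul_mul]
    have hdx : Coalgebra.comul (R := K) (d x)
        = ∑ i ∈ (ℛ K x).index, (d ((ℛ K x).left i) ⊗ₜ[K] d ((ℛ K x).right i) : B ⊗[K] B) := by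
      rw [← CoalgHomClass.map_comp_comul_apply d x, ← (ℛ K x).eq, map_sum]
      simp
    rw [hdx, ← (ℛ K b).eq, Finset.sum_mul_sum]
    simp [Algebra.TensorProduct.tmul_mul_tmul]
  · -- p₁ counital
    ext x b
    simp [smashFst_tmul, smashCounit, Bialgebra.counit_mul,
      CoalgHomClass.counit_comp_apply, smul_eq_mul]
  · -- e multiplicative
    ext b b'
    simp only [LinearMap.coe_comp, Function.comp_apply,
      TensorProduct.AlgebraTensorModule.curry_apply, TensorProduct.curry_apply,
      LinearMap.coe_restrictScalars, TensorProduct.map_tmul, LinearMap.mul'_apply,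
      smashUnit, TensorProduct.mk_apply]
    rw [smashMul_tmul ξ 1 1 b b' (ℛ K b)]
    have h5 : ∀ i ∈ (ℛ K b).index,
        ((1 : X) * ξ ((ℛ K b).left i ⊗ₜ[K] (1 : X))) ⊗ₜ[K] ((ℛ K b).right i * b')
          = (1 : X) ⊗ₜ[K] (((Coalgebra.counit (R := K) ((ℛ K b).left i)
              • (ℛ K b).right i)) * b') := by
      intro i _
      rw [one_mul, hact_unit, smul_tmul, smul_mul_assoc]
    rw [Finset.sum_congr rfl h5, ← tmul_sum, ← Finset.sum_mul,
      repr_counit_smul_right b (ℛ K b)]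
  · -- e unital
    rfl
  · -- e comultiplicative
    ext b
    simp only [LinearMap.coe_comp, Function.comp_apply, smashUnit, TensorProduct.mk_apply]
    rw [smashComul]
    simp only [LinearMap.coe_comp, Function.comp_apply, TensorProduct.map_tmul,
      Bialgebra.comul_one, Algebra.TensorProduct.one_def]
    rw [← (ℛ K b).eq]
    simp [tmul_sum, map_sum]
  · -- e counital
    ext b
    simp [smashCounit, smashUnit]
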